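/- Let d ≥ 1, l ∈ {0,1,...,d}, K' ≥ 1, K ≥ 1 be integers and δ > 0, μ > 0 with μ ≤ 1. Then there exists p₀ = p₀(d,l,K,K',δ,μ) such that the following holds for every prime p > p₀. Let Y ⊆ [-K,K]^l ⊆ F_p^l be nonempty, for each y ∈ Y let X_y ⊆ {y} × F_p^{d-l} be a set with |X_y| ≥ μp, and suppose X = ∪_{y∈Y} X_y is (K',δ)-thick along every linear function not constant on {0} × F_p^{d-l}. Then there exist subsets Z_y ⊆ X_y (y ∈ Y) such that μ|X_y|/20 ≤ |Z_y| ≤ μ|X_y|/10 for every y ∈ Y, and the set Z = ∪_{y∈Y} Z_y is (K', δ/4)-thick along every linear function that is not constant on {0} × F_p^{d-l}. -/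

import Mathlib

open Finset

/-- The interval `[-K, K] = {-K, ..., K}` regarded as a subset of `ZMod p`. -/
noncomputable def interval (p K : ℕ) : Finset (ZMod p) :=
  (Finset.Icc (-(K : ℤ)) (K : ℤ)).image (fun k : ℤ => (k : ZMod p))

/-- The linear function `x ↦ a₀ + ∑ i, a i * x i` on `(ZMod p)^d`. -/
def linMap (p d : ℕ) (a₀ : ZMod p) (a : Fin d → ZMod p) (x : Fin d → ZMod p) : ZMod p :=
  a₀ + ∑ i, a i * x i

/-- A function is constant on a set. -/
def ConstOn {p d : ℕ} (f : (Fin d → ZMod p) → ZMod p) (S : Set (Fin d → ZMod p)) : Prop :=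
  ∀ x ∈ S, ∀ y ∈ S, f x = f y

/-- A finite set `X ⊆ (ZMod p)^d` is `(K, δ)`-thick along the linear function `x ↦ a₀ + ∑ aᵢxᵢ`:
at least `δ|X|` of its elements lie outside `H(ξ, K)`. -/
def IsThickAlong {p d : ℕ} (X : Finset (Fin d → ZMod p)) (a₀ : ZMod p)
    (a : Fin d → ZMod p) (K : ℕ) (δ : ℝ) : Prop :=
  δ * (X.card : ℝ) ≤ ((X.filter (fun x => linMap p d a₀ a x ∉ interval p K)).card : ℝ)

/-- Multiset version of `IsThickAlong`, cardinalities counted with multiplicity.  -/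
def IsThickAlongM {p d : ℕ} (A : Multiset (Fin d → ZMod p)) (a₀ : ZMod p)
    (a : Fin d → ZMod p) (K : ℕ) (δ : ℝ) : Prop :=
  δ * (Multiset.card A : ℝ) ≤
    (Multiset.card (A.filter (fun x => linMap p d a₀ a x ∉ interval p K)) : ℝ)

/-- A finite set is `(K, δ)`-thick in its affine hull: it is `(K, δ)`-thick along every
linear function which is not constant on the affine hull of `X`. -/
def IsThickInHull {p d : ℕ} (X : Finset (Fin d → ZMod p)) (K : ℕ) (δ : ℝ) : Prop :=
  ∀ (a₀ : ZMod p) (a : Fin d → ZMod p),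
    ¬ ConstOn (linMap p d a₀ a)
        ((affineSpan (ZMod p) (X : Set (Fin d → ZMod p)) : AffineSubspace (ZMod p) (Fin d → ZMod p)) : Set (Fin d → ZMod p)) →
    IsThickAlong X a₀ a K δ

/-- Multiset version of `IsThickInHull` (the affine hull of the support). -/
def IsThickInHullM {p d : ℕ} (X : Multiset (Fin d → ZMod p)) (K : ℕ) (δ : ℝ) : Prop :=
  ∀ (a₀ : ZMod p) (a : Fin d → ZMod p),
    ¬ ConstOn (linMap p d a₀ a)
        ((affineSpan (ZMod p) (↑X.toFinset : Set (Fin d → ZMod p)) : AffineSubspace (ZMod p) (Fin d → ZMod p)) : Set (Fin d → ZMod p)) →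
    IsThickAlongM X a₀ a K δ

/-- A set `X ⊆ (ZMod p)^d` is `(K, K', δ)`-tubular: there are `l ∈ {0,…,d}` and an affine
isomorphism `ψ` such that `ψX ⊆ [-K,K]^l × (ZMod p)^{d-l}` and `ψX` is `(K', δ)`-thick along
every linear function which is not constant on `{0} × (ZMod p)^{d-l}`. -/
def IsTubular {p d : ℕ} (X : Finset (Fin d → ZMod p)) (K K' : ℕ) (δ : ℝ) : Prop :=
  ∃ l ≤ d, ∃ ψ : (Fin d → ZMod p) ≃ᵃ[ZMod p] (Fin d → ZMod p),
    (∀ x ∈ X, ∀ i : Fin d, (i : ℕ) < l → ψ x i ∈ interval p K) ∧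
    ∀ (a₀ : ZMod p) (a : Fin d → ZMod p),
      ¬ ConstOn (linMap p d a₀ a) {x : Fin d → ZMod p | ∀ i : Fin d, (i : ℕ) < l → x i = 0} →
      IsThickAlong (X.image (fun x => ψ x)) a₀ a K' δ

/-- Proposition `sub`: with `𝔽_p^d` identified with `𝔽_p^l × 𝔽_p^{d-l}`
(elements of `𝔽_p^l` encoded as vectors vanishing on the last `d - l` coordinates): for
`d ≥ 1`, `l ∈ {0,…,d}`, `K, K' ≥ 1`, `δ > 0` and `0 < μ ≤ 1` there is `p₀` such that for
every prime `p > p₀`: for every nonempty `Y ⊆ [-K,K]^l` and sets `X_y ⊆ {y} × 𝔽_p^{d-l}`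
with `|X_y| ≥ μp`, if `X = ⋃_y X_y` is `(K', δ)`-thick along every linear function not
constant on `{0} × 𝔽_p^{d-l}`, then there are subsets `Z_y ⊆ X_y` with
`μ|X_y|/20 ≤ |Z_y| ≤ μ|X_y|/10` for all `y ∈ Y` such that `Z = ⋃_y Z_y` is
`(K', δ/4)`-thick along every linear function not constant on `{0} × 𝔽_p^{d-l}`. -/

lemma exp_quad {u : ℝ} (hu : |u| ≤ 1) : Real.exp u ≤ 1 + u + u ^ 2 := by
  have h := Real.exp_bound hu (n := 2) (by norm_num)
  have h2 : ∑ m ∈ range 2, u ^ m / m.factorial = 1 + u := by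
    simp [Finset.sum_range_succ]
  rw [h2] at h
  have hc : (↑(Nat.succ 2) / ((Nat.factorial 2 : ℝ) * (2:ℕ))) = 3/4 := by
    norm_num [Nat.factorial]
  rw [hc] at h
  have h3 : |u| ^ 2 = u ^ 2 := by rw [sq_abs]
  rw [h3] at h
  have := abs_le.mp h
  nlinarith [sq_nonneg u]

lemma point_mgf (N m : ℕ) (hm : m ≤ N) (hN : 0 < N) {c : ℝ} (hc : |c| ≤ 1) :
    ∑ v : Fin N, Real.exp (c * ((if (v : ℕ) < m then (1:ℝ) else 0) - m / N))
      ≤ N * Real.exp (c ^ 2 * (m / N)) := by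
  set q : ℝ := m / N with hq
  have hq0 : 0 ≤ q := by positivity
  have hq1 : q ≤ 1 := by
    rw [hq]; rw [div_le_one (by positivity)]; exact_mod_cast hm
  have hsum : ∑ v : Fin N, Real.exp (c * ((if (v : ℕ) < m then (1:ℝ) else 0) - q))
      = m * Real.exp (c * (1 - q)) + (N - m) * Real.exp (c * (0 - q)) := by
    rw [Fin.sum_univ_eq_sum_range (fun i => Real.exp (c * ((if i < m then (1:ℝ) else 0) - q)))]
    rw [← Finset.sum_range_add_sum_Ico _ hm]
    have s1 : ∑ i ∈ range m, Real.exp (c * ((if i < m then (1:ℝ) else 0) - q))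
        = m * Real.exp (c * (1 - q)) := by
      rw [Finset.sum_congr rfl (g := fun _ => Real.exp (c * (1 - q))) (fun i hi => by
        rw [if_pos (Finset.mem_range.mp hi)])]
      simp [mul_comm]
    have s2 : ∑ i ∈ Ico m N, Real.exp (c * ((if i < m then (1:ℝ) else 0) - q))
        = ((N : ℝ) - m) * Real.exp (c * (0 - q)) := by
      rw [Finset.sum_congr rfl (g := fun _ => Real.exp (c * (0 - q))) (fun i hi => by
        rw [if_neg (by simpa using (Finset.mem_Ico.mp hi).1.not_gt)])]
      rw [Finset.sum_const, Nat.card_Ico, nsmul_eq_mul, Nat.cast_sub hm]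
    rw [s1, s2]
  rw [hsum]
  have e1 : Real.exp (c * (1 - q)) ≤ 1 + c * (1-q) + (c*(1-q))^2 := by
    apply exp_quad
    rw [abs_mul]
    calc |c| * |1 - q| ≤ 1 * 1 := by
          apply mul_le_mul hc _ (abs_nonneg _) zero_le_one
          rw [abs_le]; constructor <;> nlinarith
      _ = 1 := by ring
  have e2 : Real.exp (c * (0 - q)) ≤ 1 + c * (0-q) + (c*(0-q))^2 := by
    apply exp_quad
    rw [abs_mul]
    calc |c| * |0 - q| ≤ 1 * 1 := by
          apply mul_le_mul hc _ (abs_nonneg _) zero_le_one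
          rw [abs_le]; constructor <;> nlinarith
      _ = 1 := by ring
  have hmq : (m:ℝ) = N * q := by
    rw [hq]; field_simp
  have hN' : (0:ℝ) < N := by exact_mod_cast hN
  have key : (m:ℝ) * (1 + c * (1-q) + (c*(1-q))^2) + ((N:ℝ) - m) * (1 + c * (0-q) + (c*(0-q))^2)
      ≤ N * (1 + c^2 * q) := by
    have expand : (m:ℝ) * (1 + c * (1-q) + (c*(1-q))^2) + ((N:ℝ) - m) * (1 + c * (0-q) + (c*(0-q))^2)
        = N * (1 + c^2 * (q - q^2)) := by rw [hmq]; ring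
    rw [expand]
    nlinarith [mul_nonneg (mul_nonneg hN'.le (sq_nonneg c)) (sq_nonneg q)]
  have final : (N:ℝ) * (1 + c^2 * q) ≤ N * Real.exp (c^2 * q) := by
    have := Real.add_one_le_exp (c^2 * q)
    nlinarith
  have hm' : (0:ℝ) ≤ (m:ℝ) := by positivity
  have hNm' : (0:ℝ) ≤ (N:ℝ) - m := by
    have : (m:ℝ) ≤ N := by exact_mod_cast hm
    linarith
  calc (m:ℝ) * Real.exp (c * (1 - q)) + ((N:ℝ) - m) * Real.exp (c * (0 - q))
      ≤ (m:ℝ) * (1 + c * (1-q) + (c*(1-q))^2) + ((N:ℝ) - m) * (1 + c * (0-q) + (c*(0-q))^2) := by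
        apply add_le_add (mul_le_mul_of_nonneg_left e1 hm') (mul_le_mul_of_nonneg_left e2 hNm')
    _ ≤ N * (1 + c^2 * q) := key
    _ ≤ N * Real.exp (c^2 * q) := final

set_option maxHeartbeats 1000000

section Tail
variable {V : Type*} [Fintype V] [DecidableEq V]

lemma sum_prod_factor (N : ℕ) (B : Finset V) (h : Fin N → ℝ) :
    ∑ ω : V → Fin N, ∏ x ∈ B, h (ω x)
      = (N:ℝ) ^ (Fintype.card V - B.card) * (∑ v, h v) ^ B.card := by
  have step1 : ∀ ω : V → Fin N, ∏ x ∈ B, h (ω x)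
      = ∏ x : V, (if x ∈ B then h (ω x) else 1) := by
    intro ω
    rw [← Finset.prod_subset (Finset.subset_univ B) (fun x _ hx => if_neg hx)]
    exact Finset.prod_congr rfl (fun x hx => (if_pos hx).symm)
  simp only [step1]
  rw [← Fintype.prod_sum (fun (x : V) (v : Fin N) => if x ∈ B then h v else 1)]
  have step2 : ∀ x : V, (∑ v : Fin N, if x ∈ B then h v else 1)
      = if x ∈ B then (∑ v, h v) else (N:ℝ) := by
    intro x
    by_cases hx : x ∈ B <;> simp [hx]
  simp only [step2]
  rw [← Finset.prod_mul_prod_compl B (fun x => if x ∈ B then (∑ v, h v) else (N:ℝ))]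
  have p1 : ∏ x ∈ B, (if x ∈ B then (∑ v, h v) else (N:ℝ)) = (∑ v, h v) ^ B.card := by
    rw [Finset.prod_congr rfl (fun x hx => if_pos hx), Finset.prod_const]
  have p2 : ∏ x ∈ Bᶜ, (if x ∈ B then (∑ v, h v) else (N:ℝ)) = (N:ℝ) ^ (Fintype.card V - B.card) := by
    rw [Finset.prod_congr rfl (fun x hx => if_neg (Finset.mem_compl.1 hx)), Finset.prod_const,
      Finset.card_compl]
  rw [p1, p2, mul_comm]

lemma exp_sum_le (N m : ℕ) (hm : m ≤ N) (hN : 0 < N) (B : Finset V) (c : ℝ)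
    (habs : |c| ≤ 1) :
    ∑ ω : V → Fin N,
        Real.exp (c * (((B.filter fun x => (ω x : ℕ) < m).card : ℝ) - (m:ℝ)/N * B.card))
      ≤ (N:ℝ) ^ (Fintype.card V) * Real.exp (c^2 * ((m:ℝ)/N) * B.card) := by
  have hS : ∀ ω : V → Fin N,
      Real.exp (c * (((B.filter fun x => (ω x : ℕ) < m).card : ℝ) - (m:ℝ)/N * B.card))
      = ∏ x ∈ B, Real.exp (c * ((if (ω x : ℕ) < m then (1:ℝ) else 0) - (m:ℝ)/N)) := by
    intro ω
    rw [← Real.exp_sum]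
    congr 1
    have hcard : (((B.filter fun x => (ω x : ℕ) < m).card : ℕ) : ℝ)
        = ∑ x ∈ B, (if (ω x : ℕ) < m then (1:ℝ) else 0) := by
      rw [Finset.card_filter]
      push_cast
      exact Finset.sum_congr rfl (fun x _ => by split <;> norm_num)
    have hqb : (m:ℝ)/N * B.card = ∑ _x ∈ B, (m:ℝ)/N := by
      rw [Finset.sum_const, nsmul_eq_mul]; ring
    rw [hcard, hqb, ← Finset.sum_sub_distrib, Finset.mul_sum]
  calc ∑ ω : V → Fin N,
        Real.exp (c * (((B.filter fun x => (ω x : ℕ) < m).card : ℝ) - (m:ℝ)/N * B.card))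
      = ∑ ω : V → Fin N, ∏ x ∈ B,
          Real.exp (c * ((if (ω x : ℕ) < m then (1:ℝ) else 0) - (m:ℝ)/N)) :=
        Finset.sum_congr rfl (fun ω _ => hS ω)
    _ = (N:ℝ) ^ (Fintype.card V - B.card) *
          (∑ v : Fin N, Real.exp (c * ((if (v : ℕ) < m then (1:ℝ) else 0) - (m:ℝ)/N))) ^ B.card :=
        sum_prod_factor N B (fun v => Real.exp (c * ((if (v : ℕ) < m then (1:ℝ) else 0) - (m:ℝ)/N)))
    _ ≤ (N:ℝ) ^ (Fintype.card V - B.card) * ((N:ℝ) * Real.exp (c^2 * ((m:ℝ)/N))) ^ B.card := by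
        have hnn : (0:ℝ) ≤ (N:ℝ) ^ (Fintype.card V - B.card) := by positivity
        refine mul_le_mul_of_nonneg_left ?_ hnn
        exact pow_le_pow_left₀ (Finset.sum_nonneg (fun v _ => (Real.exp_pos _).le))
          (point_mgf N m hm hN habs) B.card
    _ = (N:ℝ) ^ (Fintype.card V) * Real.exp (c^2 * ((m:ℝ)/N) * B.card) := by
        rw [mul_pow, ← Real.exp_nat_mul, ← mul_assoc,
          mul_comm ((N:ℝ) ^ (Fintype.card V - B.card)) ((N:ℝ) ^ B.card), ← pow_add,
          Nat.add_sub_cancel' (Finset.card_le_univ B)]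
        ring_nf

lemma tail_count (N m : ℕ) (hm : m ≤ N) (hN : 0 < N) (B : Finset V) (ε : ℝ)
    (hε : ε = 1 ∨ ε = -1) (t c : ℝ) (hc0 : 0 ≤ c) (hc1 : c ≤ 1) :
    (((univ : Finset (V → Fin N)).filter fun ω =>
        t ≤ ε * (((B.filter fun x => (ω x : ℕ) < m).card : ℝ) - (m:ℝ)/N * B.card)).card : ℝ)
      ≤ (N:ℝ) ^ (Fintype.card V) * Real.exp (c^2 * ((m:ℝ)/N) * B.card - c * t) := by
  have habs : |c * ε| ≤ 1 := by
    rcases hε with h | h <;> rw [h] <;> simp [abs_of_nonneg hc0] <;> linarith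
  have hε2 : (c*ε)^2 = c^2 := by rcases hε with h | h <;> rw [h] <;> ring
  have hup := exp_sum_le N m hm hN B (c * ε) habs
  rw [hε2] at hup
  have hlow : (((univ : Finset (V → Fin N)).filter fun ω =>
        t ≤ ε * (((B.filter fun x => (ω x : ℕ) < m).card : ℝ) - (m:ℝ)/N * B.card)).card : ℝ)
        * Real.exp (c * t)
      ≤ ∑ ω : V → Fin N,
        Real.exp ((c * ε) * (((B.filter fun x => (ω x : ℕ) < m).card : ℝ) - (m:ℝ)/N * B.card)) := by
    set T := (univ : Finset (V → Fin N)).filter fun ω =>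
        t ≤ ε * (((B.filter fun x => (ω x : ℕ) < m).card : ℝ) - (m:ℝ)/N * B.card) with hT
    have h1 : (T.card : ℝ) * Real.exp (c * t) = ∑ _ω ∈ T, Real.exp (c * t) := by
      rw [Finset.sum_const, nsmul_eq_mul]
    rw [h1]
    refine le_trans (Finset.sum_le_sum (fun ω hω => ?_))
      (Finset.sum_le_sum_of_subset_of_nonneg (Finset.subset_univ T)
        (fun ω _ _ => (Real.exp_pos _).le))
    have hmem := (Finset.mem_filter.1 hω).2
    rw [mul_assoc]
    exact Real.exp_le_exp.2 (mul_le_mul_of_nonneg_left hmem hc0)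
  have hfinal := hlow.trans hup
  rw [Real.exp_sub, mul_div_assoc' , le_div_iff₀ (Real.exp_pos _)]
  exact hfinal


lemma final_arith {δ μ q n b S Zc : ℝ} (hδ : 0 < δ) (hμ : 0 < μ) (hq : 0 ≤ q)
    (hn : 0 ≤ n) (hth : δ * n ≤ b) (hqlo : μ/15 ≤ q) (hZle : Zc ≤ μ * n / 10)
    (hSB : -1 * (S - q * b) < q * b / 2) : δ/4 * Zc ≤ S := by
  have h1 : q * (δ * n) ≤ q * b := mul_le_mul_of_nonneg_left hth hq
  have h2 : μ/15 * (δ * n) ≤ q * (δ * n) :=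
    mul_le_mul_of_nonneg_right hqlo (mul_nonneg hδ.le hn)
  have h3 : δ/4 * Zc ≤ δ/4 * (μ * n / 10) := mul_le_mul_of_nonneg_left hZle (by linarith)
  have h4 : (0:ℝ) ≤ μ * (δ * n) := mul_nonneg hμ.le (mul_nonneg hδ.le hn)
  nlinarith

lemma card_union_le_real {α : Type*} [DecidableEq α] (s t : Finset α) {a b : ℝ}
    (hs : (s.card : ℝ) ≤ a) (ht : (t.card : ℝ) ≤ b) : (((s ∪ t).card : ℕ) : ℝ) ≤ a + b :=
  le_trans (by exact_mod_cast Finset.card_union_le s t) (add_le_add hs ht)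

theorem sub_proposition (d l K K' : ℕ) (hd : 1 ≤ d) (hl : l ≤ d) (hK : 1 ≤ K)
    (hK' : 1 ≤ K') (δ μ : ℝ) (hδ : 0 < δ) (hμ0 : 0 < μ) (hμ1 : μ ≤ 1) :
    ∃ p₀ : ℕ, ∀ p : ℕ, p.Prime → p₀ < p →
      ∀ Y : Finset (Fin d → ZMod p), Y.Nonempty →
        (∀ y ∈ Y, (∀ i : Fin d, (i : ℕ) < l → y i ∈ interval p K) ∧
                  (∀ i : Fin d, l ≤ (i : ℕ) → y i = 0)) →
        ∀ Xf : (Fin d → ZMod p) → Finset (Fin d → ZMod p),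
          (∀ y ∈ Y, (∀ x ∈ Xf y, ∀ i : Fin d, (i : ℕ) < l → x i = y i) ∧
                    μ * (p : ℝ) ≤ ((Xf y).card : ℝ)) →
          (∀ (a₀ : ZMod p) (a : Fin d → ZMod p),
            ¬ ConstOn (linMap p d a₀ a)
                {x : Fin d → ZMod p | ∀ i : Fin d, (i : ℕ) < l → x i = 0} →
            IsThickAlong (Y.biUnion Xf) a₀ a K' δ) →
          ∃ Zf : (Fin d → ZMod p) → Finset (Fin d → ZMod p),
            (∀ y ∈ Y, Zf y ⊆ Xf y ∧
              μ * ((Xf y).card : ℝ) / 20 ≤ ((Zf y).card : ℝ) ∧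
              ((Zf y).card : ℝ) ≤ μ * ((Xf y).card : ℝ) / 10) ∧
            ∀ (a₀ : ZMod p) (a : Fin d → ZMod p),
              ¬ ConstOn (linMap p d a₀ a)
                  {x : Fin d → ZMod p | ∀ i : Fin d, (i : ℕ) < l → x i = 0} →
              IsThickAlong (Y.biUnion Zf) a₀ a K' (δ / 4) := by
  classical
  -- global constants
  set N : ℕ := ⌈(280:ℝ)/μ⌉₊ with hNdef
  have h280 : (280:ℝ)/μ ≤ N := Nat.le_ceil _
  have hNle : (N:ℝ) ≤ 281/μ := by
    have h1 : (N:ℝ) < 280/μ + 1 := Nat.ceil_lt_add_one (by positivity)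
    have h2 : (1:ℝ) ≤ 1/μ := one_le_one_div hμ0 hμ1
    have h3 : (280:ℝ)/μ + 1/μ = 281/μ := by ring
    linarith
  have hN280 : (280:ℝ) ≤ (N:ℝ) := by
    refine le_trans ?_ h280
    rw [le_div_iff₀ hμ0]; nlinarith
  have hNpos : 0 < N := by exact_mod_cast lt_of_lt_of_le (by norm_num : (0:ℝ) < 280) hN280
  have hm20 : (20:ℕ) ≤ N := by exact_mod_cast le_trans (by norm_num : ((20:ℕ):ℝ) ≤ 280) hN280
  have hNR : (0:ℝ) < N := by exact_mod_cast hNpos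
  have hμN : (N:ℝ)*μ ≤ 281 := by
    rw [← le_div_iff₀ hμ0]; exact hNle
  have hμN' : (280:ℝ) ≤ (N:ℝ)*μ := by
    rw [← div_le_iff₀ hμ0]; exact h280
  have hqlo : μ/15 ≤ ((20:ℕ):ℝ)/(N:ℝ) := by
    rw [div_le_div_iff₀ (by norm_num) hNR]
    push_cast
    nlinarith
  have hqhi : ((20:ℕ):ℝ)/(N:ℝ) ≤ μ/14 := by
    rw [div_le_div_iff₀ hNR (by norm_num)]
    push_cast
    nlinarith
  have hq0 : (0:ℝ) < ((20:ℕ):ℝ)/(N:ℝ) := by positivity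
  -- choice of p₀
  obtain ⟨p₀, hp₀⟩ : ∃ p₀ : ℕ, ∀ n : ℕ, n ≥ p₀ →
      2*((2*K+1:ℕ):ℝ)^d * Real.exp (-(μ^2 * n)/960)
        + (n:ℝ)^(d+1) * Real.exp (-(δ*μ^2*n)/240) < 1 := by
    have h1 : Filter.Tendsto (fun n : ℕ => Real.exp (-(μ^2 * n)/960)) Filter.atTop (nhds 0) := by
      have heq : (fun n : ℕ => Real.exp (-(μ^2 * n)/960))
          = fun n : ℕ => (Real.exp (-(μ^2/960)))^n := by
        funext n
        rw [← Real.exp_nat_mul]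
        congr 1; ring
      rw [heq]
      apply tendsto_pow_atTop_nhds_zero_of_lt_one (Real.exp_pos _).le
      rw [Real.exp_lt_one_iff]
      nlinarith
    have h2 : Filter.Tendsto (fun n : ℕ => (n:ℝ)^(d+1) * Real.exp (-(δ*μ^2*n)/240))
        Filter.atTop (nhds 0) := by
      set c : ℝ := δ*μ^2/240 with hc
      have hcpos : 0 < c := by positivity
      have hcomp : Filter.Tendsto (fun n : ℕ => c * n) Filter.atTop Filter.atTop :=
        Filter.Tendsto.const_mul_atTop hcpos tendsto_natCast_atTop_atTop
      have h3 := (Real.tendsto_pow_mul_exp_neg_atTop_nhds_zero (d+1)).comp hcomp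
      have heq : (fun n : ℕ => (n:ℝ)^(d+1) * Real.exp (-(δ*μ^2*n)/240))
          = fun n : ℕ => (1/c^(d+1)) * ((c*n)^(d+1) * Real.exp (-(c*n))) := by
        funext n
        rw [mul_pow]
        have : -(δ*μ^2*n)/240 = -(c*n) := by rw [hc]; ring
        rw [this]
        field_simp
      rw [heq]
      have := h3.const_mul (1/c^(d+1))
      simpa using this
    have hsum := (h1.const_mul (2*((2*K+1:ℕ):ℝ)^d)).add h2
    rw [mul_zero, add_zero] at hsum
    have hev := hsum.eventually_lt_const (by norm_num : (0:ℝ) < 1)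
    exact Filter.eventually_atTop.mp hev
  refine ⟨p₀, fun p hpp hpgt Y hYne hY Xf hXf hthick => ?_⟩
  haveI : NeZero p := ⟨hpp.ne_zero⟩
  -- abbreviations
  set X := Y.biUnion Xf with hX
  -- disjointness of the fibers
  have hdisj : ∀ y₁ ∈ Y, ∀ y₂ ∈ Y, y₁ ≠ y₂ → Disjoint (Xf y₁) (Xf y₂) := by
    intro y₁ h₁ y₂ h₂ hne
    rw [Finset.disjoint_left]
    intro x hx1 hx2
    apply hne
    funext i
    rcases lt_or_ge (i : ℕ) l with hi | hi
    · rw [← (hXf y₁ h₁).1 x hx1 i hi, ← (hXf y₂ h₂).1 x hx2 i hi]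
    · rw [(hY y₁ h₁).2 i hi, (hY y₂ h₂).2 i hi]
  have hcardX : (X.card : ℝ) = ∑ y ∈ Y, ((Xf y).card : ℝ) := by
    rw [hX, Finset.card_biUnion hdisj]
    push_cast
    rfl
  have hXlb : μ * p ≤ (X.card : ℝ) := by
    obtain ⟨y₀, hy₀⟩ := hYne
    refine le_trans ((hXf y₀ hy₀).2) ?_
    rw [hcardX]
    exact Finset.single_le_sum (f := fun y => ((Xf y).card : ℝ)) (fun y _ => by positivity) hy₀
  -- bound on |Y|
  have hYcard : (Y.card : ℝ) ≤ ((2*K+1:ℕ):ℝ)^d := by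
    have hsub : Y ⊆ Fintype.piFinset (fun i : Fin d =>
        if (i : ℕ) < l then interval p K else {0}) := by
      intro y hy
      rw [Fintype.mem_piFinset]
      intro i
      rcases lt_or_ge (i : ℕ) l with hi | hi
      · rw [if_pos hi]; exact (hY y hy).1 i hi
      · rw [if_neg (not_lt.2 hi)]
        simp [(hY y hy).2 i hi]
    have h1 := Finset.card_le_card hsub
    have h2 : (Fintype.piFinset (fun i : Fin d =>
        if (i : ℕ) < l then interval p K else {0})).card ≤ (2*K+1)^d := by
      rw [Fintype.card_piFinset]
      calc ∏ i : Fin d, (if (i : ℕ) < l then interval p K else {0}).card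
          ≤ ∏ _i : Fin d, (2*K+1) := by
            apply Finset.prod_le_prod'
            intro i _
            split
            · refine le_trans (Finset.card_image_le) ?_
              rw [Int.card_Icc]
              omega
            · rw [Finset.card_singleton]; omega
        _ = (2*K+1)^d := by rw [Finset.prod_const]; simp
    exact_mod_cast le_trans h1 h2
  -- the bad events
  set Bad : Finset ((Fin d → ZMod p) → Fin N) :=
    (Y.biUnion (fun y =>
      (Finset.univ.filter fun ω : (Fin d → ZMod p) → Fin N =>
        ((20:ℕ):ℝ)/(N:ℝ) * ((Xf y).card : ℝ)/4 ≤
          (1:ℝ) * ((((Xf y).filter fun x => (ω x : ℕ) < 20).card : ℝ)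
            - ((20:ℕ):ℝ)/(N:ℝ) * ((Xf y).card : ℝ)))
      ∪ (Finset.univ.filter fun ω : (Fin d → ZMod p) → Fin N =>
        ((20:ℕ):ℝ)/(N:ℝ) * ((Xf y).card : ℝ)/4 ≤
          (-1:ℝ) * ((((Xf y).filter fun x => (ω x : ℕ) < 20).card : ℝ)
            - ((20:ℕ):ℝ)/(N:ℝ) * ((Xf y).card : ℝ)))))
    ∪ ((Finset.univ : Finset (ZMod p × (Fin d → ZMod p))).biUnion (fun P =>
      if δ * (X.card : ℝ) ≤
          (((X.filter fun x => linMap p d P.1 P.2 x ∉ interval p K').card : ℕ) : ℝ) then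
        Finset.univ.filter fun ω : (Fin d → ZMod p) → Fin N =>
          ((20:ℕ):ℝ)/(N:ℝ) *
            (((X.filter fun x => linMap p d P.1 P.2 x ∉ interval p K').card : ℕ) : ℝ)/2 ≤
            (-1:ℝ) * (((((X.filter fun x => linMap p d P.1 P.2 x ∉ interval p K').filter
                fun x => (ω x : ℕ) < 20).card : ℝ))
              - ((20:ℕ):ℝ)/(N:ℝ) *
                (((X.filter fun x => linMap p d P.1 P.2 x ∉ interval p K').card : ℕ) : ℝ))
      else ∅)) with hBad
  -- cardinality of the sample space
  have cardΩ : (Fintype.card ((Fin d → ZMod p) → Fin N)) = N ^ (Fintype.card (Fin d → ZMod p)) := by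
    rw [Fintype.card_fun, Fintype.card_fin]
  have hNcVpos : (0:ℝ) < (N:ℝ) ^ (Fintype.card (Fin d → ZMod p)) := by positivity
  -- the two exponential bounds
  have hE1 : ∀ y ∈ Y, ∀ ε : ℝ, ε = 1 ∨ ε = -1 →
      (((Finset.univ.filter fun ω : (Fin d → ZMod p) → Fin N =>
        ((20:ℕ):ℝ)/(N:ℝ) * ((Xf y).card : ℝ)/4 ≤
          ε * ((((Xf y).filter fun x => (ω x : ℕ) < 20).card : ℝ)
            - ((20:ℕ):ℝ)/(N:ℝ) * ((Xf y).card : ℝ))).card : ℝ))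
      ≤ (N:ℝ) ^ (Fintype.card (Fin d → ZMod p)) * Real.exp (-(μ^2 * p)/960) := by
    intro y hy ε hε
    have ht := tail_count N 20 hm20 hNpos (Xf y) ε hε
      (((20:ℕ):ℝ)/(N:ℝ) * ((Xf y).card : ℝ)/4) (1/8) (by norm_num) (by norm_num)
    refine le_trans ht ?_
    apply mul_le_mul_of_nonneg_left _ hNcVpos.le
    apply Real.exp_le_exp.2
    have hb : μ * p ≤ ((Xf y).card : ℝ) := (hXf y hy).2
    have hbnn : (0:ℝ) ≤ ((Xf y).card : ℝ) := by positivity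
    have hpnn : (0:ℝ) ≤ (p:ℝ) := by positivity
    have hkey : μ/15 * (μ * p) ≤ ((20:ℕ):ℝ)/(N:ℝ) * ((Xf y).card : ℝ) := by
      apply mul_le_mul hqlo hb (by positivity) hq0.le
    nlinarith
  have hE2 : ∀ P : ZMod p × (Fin d → ZMod p),
      δ * (X.card : ℝ) ≤
          (((X.filter fun x => linMap p d P.1 P.2 x ∉ interval p K').card : ℕ) : ℝ) →
      (((Finset.univ.filter fun ω : (Fin d → ZMod p) → Fin N =>
          ((20:ℕ):ℝ)/(N:ℝ) *
            (((X.filter fun x => linMap p d P.1 P.2 x ∉ interval p K').card : ℕ) : ℝ)/2 ≤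
            (-1:ℝ) * (((((X.filter fun x => linMap p d P.1 P.2 x ∉ interval p K').filter
                fun x => (ω x : ℕ) < 20).card : ℝ))
              - ((20:ℕ):ℝ)/(N:ℝ) *
                (((X.filter fun x => linMap p d P.1 P.2 x ∉ interval p K').card : ℕ) : ℝ))).card : ℝ))
      ≤ (N:ℝ) ^ (Fintype.card (Fin d → ZMod p)) * Real.exp (-(δ*μ^2*p)/240) := by
    intro P hP
    have ht := tail_count N 20 hm20 hNpos
      (X.filter fun x => linMap p d P.1 P.2 x ∉ interval p K') (-1) (Or.inr rfl)
      (((20:ℕ):ℝ)/(N:ℝ) *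
        (((X.filter fun x => linMap p d P.1 P.2 x ∉ interval p K').card : ℕ) : ℝ)/2)
      (1/4) (by norm_num) (by norm_num)
    refine le_trans ht ?_
    apply mul_le_mul_of_nonneg_left _ hNcVpos.le
    apply Real.exp_le_exp.2
    have hb : δ * (μ * p) ≤
        (((X.filter fun x => linMap p d P.1 P.2 x ∉ interval p K').card : ℕ) : ℝ) := by
      refine le_trans ?_ hP
      exact mul_le_mul_of_nonneg_left hXlb hδ.le
    have hbnn : (0:ℝ) ≤
        (((X.filter fun x => linMap p d P.1 P.2 x ∉ interval p K').card : ℕ) : ℝ) := by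
      positivity
    have hpnn : (0:ℝ) ≤ (p:ℝ) := by positivity
    have hkey : μ/15 * (δ * (μ * p)) ≤ ((20:ℕ):ℝ)/(N:ℝ) *
        (((X.filter fun x => linMap p d P.1 P.2 x ∉ interval p K').card : ℕ) : ℝ) :=
      mul_le_mul hqlo hb (by positivity) hq0.le
    nlinarith
  -- counting the bad set
  have hBadCard : (Bad.card : ℝ) < (N:ℝ) ^ (Fintype.card (Fin d → ZMod p)) := by
    have hcount1 : (((Y.biUnion (fun y =>
        (Finset.univ.filter fun ω : (Fin d → ZMod p) → Fin N =>
          ((20:ℕ):ℝ)/(N:ℝ) * ((Xf y).card : ℝ)/4 ≤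
            (1:ℝ) * ((((Xf y).filter fun x => (ω x : ℕ) < 20).card : ℝ)
              - ((20:ℕ):ℝ)/(N:ℝ) * ((Xf y).card : ℝ)))
        ∪ (Finset.univ.filter fun ω : (Fin d → ZMod p) → Fin N =>
          ((20:ℕ):ℝ)/(N:ℝ) * ((Xf y).card : ℝ)/4 ≤
            (-1:ℝ) * ((((Xf y).filter fun x => (ω x : ℕ) < 20).card : ℝ)
              - ((20:ℕ):ℝ)/(N:ℝ) * ((Xf y).card : ℝ))))).card : ℕ) : ℝ)
        ≤ ((2*K+1:ℕ):ℝ)^d *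
          (2 * ((N:ℝ) ^ (Fintype.card (Fin d → ZMod p)) * Real.exp (-(μ^2 * p)/960))) := by
      calc (((Y.biUnion _).card : ℕ) : ℝ)
          ≤ ∑ y ∈ Y, ((((Finset.univ.filter fun ω : (Fin d → ZMod p) → Fin N =>
              ((20:ℕ):ℝ)/(N:ℝ) * ((Xf y).card : ℝ)/4 ≤
                (1:ℝ) * ((((Xf y).filter fun x => (ω x : ℕ) < 20).card : ℝ)
                  - ((20:ℕ):ℝ)/(N:ℝ) * ((Xf y).card : ℝ)))
            ∪ (Finset.univ.filter fun ω : (Fin d → ZMod p) → Fin N =>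
              ((20:ℕ):ℝ)/(N:ℝ) * ((Xf y).card : ℝ)/4 ≤
                (-1:ℝ) * ((((Xf y).filter fun x => (ω x : ℕ) < 20).card : ℝ)
                  - ((20:ℕ):ℝ)/(N:ℝ) * ((Xf y).card : ℝ)))).card : ℕ) : ℝ) := by
            exact_mod_cast Finset.card_biUnion_le
        _ ≤ ∑ _y ∈ Y, 2 * ((N:ℝ) ^ (Fintype.card (Fin d → ZMod p)) *
              Real.exp (-(μ^2 * p)/960)) := by
            apply Finset.sum_le_sum
            intro y hy
            have hcu := card_union_le_real _ _ (hE1 y hy 1 (Or.inl rfl))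
              (hE1 y hy (-1) (Or.inr rfl))
            linarith
        _ = (Y.card : ℝ) * (2 * ((N:ℝ) ^ (Fintype.card (Fin d → ZMod p)) *
              Real.exp (-(μ^2 * p)/960))) := by
            rw [Finset.sum_const, nsmul_eq_mul]
        _ ≤ ((2*K+1:ℕ):ℝ)^d * (2 * ((N:ℝ) ^ (Fintype.card (Fin d → ZMod p)) *
              Real.exp (-(μ^2 * p)/960))) := by
            apply mul_le_mul_of_nonneg_right hYcard (by positivity)
    have hcount2 : ((((Finset.univ : Finset (ZMod p × (Fin d → ZMod p))).biUnion (fun P =>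
        if δ * (X.card : ℝ) ≤
            (((X.filter fun x => linMap p d P.1 P.2 x ∉ interval p K').card : ℕ) : ℝ) then
          Finset.univ.filter fun ω : (Fin d → ZMod p) → Fin N =>
            ((20:ℕ):ℝ)/(N:ℝ) *
              (((X.filter fun x => linMap p d P.1 P.2 x ∉ interval p K').card : ℕ) : ℝ)/2 ≤
              (-1:ℝ) * (((((X.filter fun x => linMap p d P.1 P.2 x ∉ interval p K').filter
                  fun x => (ω x : ℕ) < 20).card : ℝ))
                - ((20:ℕ):ℝ)/(N:ℝ) *
                  (((X.filter fun x => linMap p d P.1 P.2 x ∉ interval p K').card : ℕ) : ℝ))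
        else ∅)).card : ℕ) : ℝ)
        ≤ (p:ℝ)^(d+1) * ((N:ℝ) ^ (Fintype.card (Fin d → ZMod p)) *
            Real.exp (-(δ*μ^2*p)/240)) := by
      calc ((((Finset.univ : Finset (ZMod p × (Fin d → ZMod p))).biUnion _).card : ℕ) : ℝ)
          ≤ ∑ P : ZMod p × (Fin d → ZMod p), (((if δ * (X.card : ℝ) ≤
            (((X.filter fun x => linMap p d P.1 P.2 x ∉ interval p K').card : ℕ) : ℝ) then
          Finset.univ.filter fun ω : (Fin d → ZMod p) → Fin N =>
            ((20:ℕ):ℝ)/(N:ℝ) *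
              (((X.filter fun x => linMap p d P.1 P.2 x ∉ interval p K').card : ℕ) : ℝ)/2 ≤
              (-1:ℝ) * (((((X.filter fun x => linMap p d P.1 P.2 x ∉ interval p K').filter
                  fun x => (ω x : ℕ) < 20).card : ℝ))
                - ((20:ℕ):ℝ)/(N:ℝ) *
                  (((X.filter fun x => linMap p d P.1 P.2 x ∉ interval p K').card : ℕ) : ℝ))
        else ∅).card : ℕ) : ℝ) := by
            exact_mod_cast Finset.card_biUnion_le
        _ ≤ ∑ _P : ZMod p × (Fin d → ZMod p),
              ((N:ℝ) ^ (Fintype.card (Fin d → ZMod p)) * Real.exp (-(δ*μ^2*p)/240)) := by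
            apply Finset.sum_le_sum
            intro P _
            split
            · next hcond => exact hE2 P hcond
            · simp only [Finset.card_empty, Nat.cast_zero]
              positivity
        _ = ((Fintype.card (ZMod p × (Fin d → ZMod p)) : ℕ) : ℝ) *
              ((N:ℝ) ^ (Fintype.card (Fin d → ZMod p)) * Real.exp (-(δ*μ^2*p)/240)) := by
            rw [Finset.sum_const, nsmul_eq_mul, Finset.card_univ]
        _ ≤ (p:ℝ)^(d+1) * ((N:ℝ) ^ (Fintype.card (Fin d → ZMod p)) *
              Real.exp (-(δ*μ^2*p)/240)) := by
            apply mul_le_mul_of_nonneg_right _ (by positivity)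
            have : Fintype.card (ZMod p × (Fin d → ZMod p)) = p^(d+1) := by
              rw [Fintype.card_prod, ZMod.card, Fintype.card_fun, ZMod.card, Fintype.card_fin,
                pow_succ, mul_comm]
            rw [this]
            push_cast
            exact le_refl _
    have hunion : ((Bad.card : ℕ) : ℝ) ≤
        ((2*K+1:ℕ):ℝ)^d * (2 * ((N:ℝ) ^ (Fintype.card (Fin d → ZMod p)) *
          Real.exp (-(μ^2 * p)/960)))
        + (p:ℝ)^(d+1) * ((N:ℝ) ^ (Fintype.card (Fin d → ZMod p)) *
          Real.exp (-(δ*μ^2*p)/240)) := by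
      rw [hBad]
      exact card_union_le_real _ _ hcount1 hcount2
    have hsmall := hp₀ p (le_of_lt hpgt)
    calc (Bad.card : ℝ)
        ≤ _ := hunion
      _ = (N:ℝ) ^ (Fintype.card (Fin d → ZMod p)) *
          (2*((2*K+1:ℕ):ℝ)^d * Real.exp (-(μ^2 * p)/960)
            + (p:ℝ)^(d+1) * Real.exp (-(δ*μ^2*p)/240)) := by ring
      _ < (N:ℝ) ^ (Fintype.card (Fin d → ZMod p)) * 1 := by
          exact mul_lt_mul_of_pos_left hsmall hNcVpos
      _ = (N:ℝ) ^ (Fintype.card (Fin d → ZMod p)) := by ring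
  -- extract a good ω
  have hltΩ : Bad.card < (Finset.univ : Finset ((Fin d → ZMod p) → Fin N)).card := by
    rw [Finset.card_univ, cardΩ]
    exact_mod_cast hBadCard
  obtain ⟨ω, -, hω⟩ := Finset.not_subset.1
    (fun hsub => absurd (Finset.card_le_card hsub) (not_le.2 hltΩ))
  -- the selected sets
  rw [hBad] at hω
  -- per-fiber size bounds
  have hSbounds : ∀ y ∈ Y,
      μ * ((Xf y).card : ℝ)/20 ≤ (((Xf y).filter (fun x => (ω x : ℕ) < 20)).card : ℝ) ∧
      (((Xf y).filter (fun x => (ω x : ℕ) < 20)).card : ℝ) ≤ μ * ((Xf y).card : ℝ)/10 := by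
    intro y hy
    have hn1 : ¬ (((20:ℕ):ℝ)/(N:ℝ) * ((Xf y).card : ℝ)/4 ≤
        (1:ℝ) * ((((Xf y).filter fun x => (ω x : ℕ) < 20).card : ℝ)
          - ((20:ℕ):ℝ)/(N:ℝ) * ((Xf y).card : ℝ))) := by
      intro hc
      exact hω (Finset.mem_union_left _ (Finset.mem_biUnion.2 ⟨y, hy,
        Finset.mem_union_left _ (Finset.mem_filter.2 ⟨Finset.mem_univ _, hc⟩)⟩))
    have hn2 : ¬ (((20:ℕ):ℝ)/(N:ℝ) * ((Xf y).card : ℝ)/4 ≤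
        (-1:ℝ) * ((((Xf y).filter fun x => (ω x : ℕ) < 20).card : ℝ)
          - ((20:ℕ):ℝ)/(N:ℝ) * ((Xf y).card : ℝ))) := by
      intro hc
      exact hω (Finset.mem_union_left _ (Finset.mem_biUnion.2 ⟨y, hy,
        Finset.mem_union_right _ (Finset.mem_filter.2 ⟨Finset.mem_univ _, hc⟩)⟩))
    rw [not_le] at hn1 hn2
    have hb0 : (0:ℝ) ≤ ((Xf y).card : ℝ) := Nat.cast_nonneg _
    have hlo := mul_le_mul_of_nonneg_right hqlo hb0
    have hhi := mul_le_mul_of_nonneg_right hqhi hb0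
    constructor
    · nlinarith
    · nlinarith
  refine ⟨fun y => (Xf y).filter (fun x => (ω x : ℕ) < 20), ?_, ?_⟩
  · intro y hy
    exact ⟨Finset.filter_subset _ _, (hSbounds y hy).1, (hSbounds y hy).2⟩
  · intro a₀ a hnc
    have hth := hthick a₀ a hnc
    unfold IsThickAlong at hth ⊢
    have hnotL : ω ∉ (if δ * (X.card : ℝ) ≤
          (((X.filter fun x => linMap p d a₀ a x ∉ interval p K').card : ℕ) : ℝ) then
        Finset.univ.filter fun ω : (Fin d → ZMod p) → Fin N =>
          ((20:ℕ):ℝ)/(N:ℝ) *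
            (((X.filter fun x => linMap p d a₀ a x ∉ interval p K').card : ℕ) : ℝ)/2 ≤
            (-1:ℝ) * (((((X.filter fun x => linMap p d a₀ a x ∉ interval p K').filter
                fun x => (ω x : ℕ) < 20).card : ℝ))
              - ((20:ℕ):ℝ)/(N:ℝ) *
                (((X.filter fun x => linMap p d a₀ a x ∉ interval p K').card : ℕ) : ℝ))
      else ∅) := by
      intro hmem
      exact hω (Finset.mem_union_right _ (Finset.mem_biUnion.2 ⟨(a₀, a), Finset.mem_univ _, hmem⟩))
    rw [if_pos hth] at hnotL
    have hSB : ¬ (((20:ℕ):ℝ)/(N:ℝ) *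
          (((X.filter fun x => linMap p d a₀ a x ∉ interval p K').card : ℕ) : ℝ)/2 ≤
          (-1:ℝ) * (((((X.filter fun x => linMap p d a₀ a x ∉ interval p K').filter
              fun x => (ω x : ℕ) < 20).card : ℝ))
            - ((20:ℕ):ℝ)/(N:ℝ) *
              (((X.filter fun x => linMap p d a₀ a x ∉ interval p K').card : ℕ) : ℝ))) := by
      intro hc
      exact hnotL (Finset.mem_filter.2 ⟨Finset.mem_univ _, hc⟩)
    rw [not_le] at hSB
    -- cardinality of Z
    have hZdisj : ∀ y₁ ∈ Y, ∀ y₂ ∈ Y, y₁ ≠ y₂ →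
        Disjoint ((Xf y₁).filter (fun x => (ω x : ℕ) < 20))
          ((Xf y₂).filter (fun x => (ω x : ℕ) < 20)) := by
      intro y₁ h₁ y₂ h₂ hne
      exact Finset.disjoint_filter_filter (hdisj y₁ h₁ y₂ h₂ hne)
    have hZcard : (((Y.biUnion (fun y => (Xf y).filter (fun x => (ω x : ℕ) < 20))).card : ℕ) : ℝ)
        = ∑ y ∈ Y, (((Xf y).filter (fun x => (ω x : ℕ) < 20)).card : ℝ) := by
      rw [Finset.card_biUnion hZdisj]
      push_cast
      rfl
    have hZle : (((Y.biUnion (fun y => (Xf y).filter (fun x => (ω x : ℕ) < 20))).card : ℕ) : ℝ)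
        ≤ μ * (X.card : ℝ)/10 := by
      rw [hZcard, hcardX, Finset.mul_sum, Finset.sum_div]
      exact Finset.sum_le_sum (fun y hy => (hSbounds y hy).2)
    -- the filtered Z set
    have hfilt : (Y.biUnion (fun y => (Xf y).filter (fun x => (ω x : ℕ) < 20))).filter
          (fun x => linMap p d a₀ a x ∉ interval p K')
        = (X.filter fun x => linMap p d a₀ a x ∉ interval p K').filter
          (fun x => (ω x : ℕ) < 20) := by
      ext x
      simp only [Finset.mem_filter, Finset.mem_biUnion, hX]
      tauto
    rw [hfilt]
    exact final_arith hδ hμ0 hq0.le (Nat.cast_nonneg _) hth hqlo hZle hSB
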